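/- arXiv:2407.09476 — 2 statements merged into one kernel-verified Lean document; each statement's English description precedes it below -/
import Mathlib

section
/- Let G be a 3-non-compliant finite simple graph on exactly 14 vertices, and let u and v be non-adjacent vertices of G with deg_G(u) = deg_G(v) = 7. Then u and v have at least 4 common neighbors in G, i.e. |N_G(u) ∩ N_G(v)| ≥ 4. -/
/-- `S` is a connected dominating set of the simple graph `G`: the subgraph of `G`
induced by `S` is connected (in particular `S` is nonempty) and every vertex
outside `S` has a neighbor in `S`. -/
def ConnDomSet {V : Type*} (G : SimpleGraph V) (S : Finset V) : Prop :=
  S.Nonempty ∧ (G.induce (↑S : Set V)).Connected ∧ ∀ v ∉ S, ∃ u ∈ S, G.Adj u v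

/-- A graph `G` is `k`-compliant if `G` or its complement has a connected dominating
set of cardinality at most `k`. -/
def Compliant {V : Type*} (G : SimpleGraph V) (k : ℕ) : Prop :=
  (∃ S : Finset V, S.card ≤ k ∧ ConnDomSet G S) ∨
    (∃ S : Finset V, S.card ≤ k ∧ ConnDomSet Gᶜ S)

lemma hub_connected {V : Type*} (H : SimpleGraph V) (s : Set V) (x : V) (hx : x ∈ s)
    (h : ∀ y ∈ s, y ≠ x → H.Adj x y) : (H.induce s).Connected := by
  rw [SimpleGraph.connected_iff]
  refine ⟨?_, ⟨⟨x, hx⟩⟩⟩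
  have key : ∀ a : s, (H.induce s).Reachable ⟨x, hx⟩ a := by
    rintro ⟨a, ha⟩
    rcases eq_or_ne a x with rfl | hax
    · exact SimpleGraph.Reachable.refl _
    · exact SimpleGraph.Adj.reachable (by exact h a ha hax)
  intro a b
  exact (key a).symm.trans (key b)

lemma card_triple_le {V : Type*} [DecidableEq V] (a b c : V) :
    ({a, b, c} : Finset V).card ≤ 3 := by
  refine (Finset.card_insert_le _ _).trans (Nat.add_le_add_right ?_ 1)
  refine (Finset.card_insert_le _ _).trans ?_
  simp

theorem stmt7 {V : Type*} [Fintype V] [DecidableEq V] (G : SimpleGraph V)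
    [DecidableRel G.Adj] (hV : Fintype.card V = 14) (hG : ¬ Compliant G 3)
    (u v : V) (huv : u ≠ v) (hadj : ¬ G.Adj u v)
    (hdu : G.degree u = 7) (hdv : G.degree v = 7) :
    4 ≤ (G.neighborFinset u ∩ G.neighborFinset v).card := by
  by_contra hlt
  push_neg at hlt
  set Nu := G.neighborFinset u with hNu
  set Nv := G.neighborFinset v with hNv
  have hcu : Nu.card = 7 := hdu
  have hcv : Nv.card = 7 := hdv
  have huNu : u ∉ Nu := by simp [hNu]
  have huNv : u ∉ Nv := by
    simp only [hNv, SimpleGraph.mem_neighborFinset]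
    exact fun h => hadj h.symm
  have hvNu : v ∉ Nu := by
    simp only [hNu, SimpleGraph.mem_neighborFinset]
    exact hadj
  have hvNv : v ∉ Nv := by simp [hNv]
  have hunion : (Nu ∪ Nv).card + (Nu ∩ Nv).card = 14 := by
    rw [Finset.card_union_add_card_inter, hcu, hcv]
  set T : Finset V := insert u (insert v (Nu ∪ Nv)) with hT
  have hTcard : T.card = (Nu ∪ Nv).card + 2 := by
    rw [hT, Finset.card_insert_of_notMem, Finset.card_insert_of_notMem]
    · simp [Finset.mem_union, hvNu, hvNv]
    · simp [Finset.mem_insert, Finset.mem_union, huv, huNu, huNv]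
  have hTle : T.card ≤ 14 := by
    rw [← hV, ← Finset.card_univ]
    exact Finset.card_le_univ _
  have ht2 : 2 ≤ (Nu ∩ Nv).card := by omega
  set R : Finset V := Finset.univ \ T with hR
  have hRcard : R.card = (Nu ∩ Nv).card - 2 := by
    rw [hR, Finset.card_sdiff_of_subset (Finset.subset_univ _), Finset.card_univ, hV]
    omega
  have hR1 : R.card ≤ 1 := by omega
  have hmemT : ∀ w : V, w ∉ R → w ∈ T := by
    intro w hw
    by_contra hwT
    exact hw (by simp [hR, hwT])
  obtain ⟨d, hd⟩ : (Nu ∩ Nv).Nonempty := Finset.card_pos.mp (by omega)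
  -- A common neighbor d' dominating all of R gives a CDS {u, d', v} of G.
  by_cases hcase : ∃ d' ∈ Nu ∩ Nv, ∀ w ∈ R, G.Adj d' w
  · obtain ⟨d', hd', hdom⟩ := hcase
    have hd'u : G.Adj u d' := by
      have := (Finset.mem_inter.mp hd').1
      rwa [hNu, SimpleGraph.mem_neighborFinset] at this
    have hd'v : G.Adj v d' := by
      have := (Finset.mem_inter.mp hd').2
      rwa [hNv, SimpleGraph.mem_neighborFinset] at this
    refine hG (Or.inl ⟨{u, d', v}, card_triple_le u d' v, ⟨u, by simp⟩, ?_, ?_⟩)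
    · refine hub_connected G _ d' (by simp) ?_
      intro y hy hyd
      simp only [Finset.coe_insert, Set.mem_insert_iff, Finset.coe_singleton,
        Set.mem_singleton_iff] at hy
      rcases hy with rfl | rfl | rfl
      · exact hd'u.symm
      · exact absurd rfl hyd
      · exact hd'v.symm
    · intro w hw
      simp only [Finset.mem_insert, Finset.mem_singleton, not_or] at hw
      obtain ⟨hwu, hwd, hwv⟩ := hw
      by_cases hwR : w ∈ R
      · exact ⟨d', by simp, hdom w hwR⟩
      · have hwT := hmemT w hwR
        simp only [hT, Finset.mem_insert, Finset.mem_union] at hwT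
        rcases hwT with rfl | rfl | h | h
        · exact absurd rfl hwu
        · exact absurd rfl hwv
        · exact ⟨u, by simp, (SimpleGraph.mem_neighborFinset _ _ _).mp h⟩
        · exact ⟨v, by simp, (SimpleGraph.mem_neighborFinset _ _ _).mp h⟩
  · -- Otherwise there is r ∈ R not adjacent to any common neighbor; {u,v,r} is a CDS of Gᶜ.
    push_neg at hcase
    obtain ⟨r, hrR, _⟩ := hcase d hd
    have hrT : r ∉ T := by
      have := hrR; rw [hR, Finset.mem_sdiff] at this; exact this.2
    simp only [hT, Finset.mem_insert, Finset.mem_union, not_or] at hrT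
    obtain ⟨hru, hrv, hrNu, hrNv⟩ := hrT
    have hrI : ∀ d' ∈ Nu ∩ Nv, ¬ G.Adj d' r := by
      intro d' hd'
      obtain ⟨w, hwR, hwadj⟩ := hcase d' hd'
      have : w = r := Finset.card_le_one.mp hR1 w hwR r hrR
      rwa [this] at hwadj
    have hGc_uv : Gᶜ.Adj u v := by rw [SimpleGraph.compl_adj]; exact ⟨huv, hadj⟩
    have hGc_ur : Gᶜ.Adj u r := by
      rw [SimpleGraph.compl_adj]
      refine ⟨Ne.symm hru, fun h => hrNu ?_⟩
      rw [hNu, SimpleGraph.mem_neighborFinset]; exact h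
    refine hG (Or.inr ⟨{u, v, r}, card_triple_le u v r, ⟨u, by simp⟩, ?_, ?_⟩)
    · refine hub_connected Gᶜ _ u (by simp) ?_
      intro y hy hyu
      simp only [Finset.coe_insert, Set.mem_insert_iff, Finset.coe_singleton,
        Set.mem_singleton_iff] at hy
      rcases hy with rfl | rfl | rfl
      · exact absurd rfl hyu
      · exact hGc_uv
      · exact hGc_ur
    · intro w hw
      simp only [Finset.mem_insert, Finset.mem_singleton, not_or] at hw
      obtain ⟨hwu, hwv, hwr⟩ := hw
      by_cases hwNu : w ∈ Nu
      · by_cases hwNv : w ∈ Nv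
        · refine ⟨r, by simp, ?_⟩
          rw [SimpleGraph.compl_adj]
          refine ⟨fun h => hrNu (h ▸ hwNu), fun h => ?_⟩
          exact hrI w (Finset.mem_inter.mpr ⟨hwNu, hwNv⟩) h.symm
        · refine ⟨v, by simp, ?_⟩
          rw [SimpleGraph.compl_adj]
          exact ⟨Ne.symm hwv, fun h => hwNv (by rw [hNv, SimpleGraph.mem_neighborFinset]; exact h)⟩
      · refine ⟨u, by simp, ?_⟩
        rw [SimpleGraph.compl_adj]
        exact ⟨Ne.symm hwu, fun h => hwNu (by rw [hNu, SimpleGraph.mem_neighborFinset]; exact h)⟩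
end

section
/- Let G be a 3-non-compliant finite simple graph on exactly 14 vertices, and let u and v be adjacent vertices of G with deg_G(u) = deg_G(v) = 7. Then u and v have at least 3 common neighbors in G, i.e. |N_G(u) ∩ N_G(v)| ≥ 3. -/
/-- If some vertex `h` of `S` is adjacent to every other vertex of `S`, the
induced graph on `S` is connected. -/
lemma star_conn {V : Type*} (G : SimpleGraph V) (S : Set V) (h : V) (hh : h ∈ S)
    (hadj : ∀ x ∈ S, x ≠ h → G.Adj h x) : (G.induce S).Connected := by
  rw [SimpleGraph.connected_iff]
  refine ⟨?_, ⟨⟨h, hh⟩⟩⟩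
  have key : ∀ z : S, (G.induce S).Reachable ⟨h, hh⟩ z := by
    rintro ⟨z, hz⟩
    rcases eq_or_ne z h with rfl | hne
    · exact SimpleGraph.Reachable.refl _
    · exact SimpleGraph.Adj.reachable (by simpa using hadj z hz hne)
  intro x y
  exact (key x).symm.trans (key y)

lemma cds_star {V : Type*} {G : SimpleGraph V} {S : Finset V} {h : V} (hh : h ∈ S)
    (hstar : ∀ x ∈ S, x ≠ h → G.Adj h x)
    (hdom : ∀ w ∉ S, ∃ x ∈ S, G.Adj x w) : ConnDomSet G S := by
  refine ⟨⟨h, hh⟩, ?_, hdom⟩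
  exact star_conn G (↑S) h (by simpa using hh)
    (fun x hx hxh => hstar x (by simpa using hx) hxh)

lemma triple_cds {V : Type*} [DecidableEq V] {G : SimpleGraph V} {u v x : V}
    (huv : G.Adj u v) (hx : G.Adj u x ∨ G.Adj v x)
    (hdom : ∀ w ∉ ({u, v, x} : Finset V), ∃ y ∈ ({u, v, x} : Finset V), G.Adj y w) :
    ConnDomSet G {u, v, x} := by
  rcases hx with hx | hx
  · refine cds_star (h := u) (by simp) ?_ hdom
    intro z hz hzu
    simp only [Finset.mem_insert, Finset.mem_singleton] at hz
    rcases hz with rfl | rfl | rfl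
    · exact absurd rfl hzu
    · exact huv
    · exact hx
  · refine cds_star (h := v) (by simp) ?_ hdom
    intro z hz hzv
    simp only [Finset.mem_insert, Finset.mem_singleton] at hz
    rcases hz with rfl | rfl | rfl
    · exact huv.symm
    · exact absurd rfl hzv
    · exact hx

theorem stmt8 {V : Type*} [Fintype V] [DecidableEq V] (G : SimpleGraph V)
    [DecidableRel G.Adj] (hV : Fintype.card V = 14) (hG : ¬ Compliant G 3)
    (u v : V) (hadj : G.Adj u v)
    (hdu : G.degree u = 7) (hdv : G.degree v = 7) :
    3 ≤ (G.neighborFinset u ∩ G.neighborFinset v).card := by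
  classical
  by_contra hlt
  push_neg at hlt
  have hG1 : ∀ S : Finset V, S.card ≤ 3 → ¬ ConnDomSet G S :=
    fun S h1 h2 => hG (Or.inl ⟨S, h1, h2⟩)
  have hG2 : ∀ S : Finset V, S.card ≤ 3 → ¬ ConnDomSet Gᶜ S :=
    fun S h1 h2 => hG (Or.inr ⟨S, h1, h2⟩)
  set Nu := G.neighborFinset u with hNu
  set Nv := G.neighborFinset v with hNv
  have hcard : (Nu ∪ Nv).card + (Nu ∩ Nv).card = 14 := by
    rw [Finset.card_union_add_card_inter, hNu, hNv,
      SimpleGraph.card_neighborFinset_eq_degree, SimpleGraph.card_neighborFinset_eq_degree,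
      hdu, hdv]
  set M := Finset.univ \ (Nu ∪ Nv) with hMdef
  have hMcard : M.card ≤ 2 := by
    rw [hMdef, Finset.card_sdiff_of_subset (Finset.subset_univ _), Finset.card_univ, hV]
    omega
  have hmemNu : ∀ w, w ∈ Nu ↔ G.Adj u w := fun w => SimpleGraph.mem_neighborFinset G u w
  have hmemNv : ∀ w, w ∈ Nv ↔ G.Adj v w := fun w => SimpleGraph.mem_neighborFinset G v w
  have hnotM : ∀ w, w ∉ M ↔ (G.Adj u w ∨ G.Adj v w) := by
    intro w
    rw [hMdef, Finset.mem_sdiff]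
    simp [hmemNu w, hmemNv w]
    tauto
  have hMfact : ∀ m ∈ M, ¬ G.Adj u m ∧ ¬ G.Adj v m := by
    intro m hm
    rw [hMdef, Finset.mem_sdiff, Finset.mem_union] at hm
    push_neg at hm
    exact ⟨fun h => hm.2.1 ((hmemNu m).mpr h), fun h => hm.2.2 ((hmemNv m).mpr h)⟩
  have huvne : u ≠ v := hadj.ne
  -- case on the size of M
  rcases Finset.eq_empty_or_nonempty M with hM0 | ⟨m1, hm1⟩
  · -- M empty: {u, v} is a CDS of G
    refine hG1 {u, v} ?_ ?_
    · exact le_trans (Finset.card_insert_le _ _) (by simp)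
    · refine cds_star (h := u) (by simp) ?_ ?_
      · intro z hz hzu
        simp only [Finset.mem_insert, Finset.mem_singleton] at hz
        rcases hz with rfl | rfl
        · exact absurd rfl hzu
        · exact hadj
      · intro w _
        have hwM : w ∉ M := by rw [hM0]; simp
        rcases (hnotM w).mp hwM with h | h
        · exact ⟨u, by simp, h⟩
        · exact ⟨v, by simp, h⟩
  · by_cases h2 : ∃ m2 ∈ M, m2 ≠ m1
    · -- M = {m1, m2}
      obtain ⟨m2, hm2, hm21⟩ := h2
      have hMeq : M = {m1, m2} := by
        refine (Finset.eq_of_subset_of_card_le ?_ ?_).symm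
        · intro z hz
          simp only [Finset.mem_insert, Finset.mem_singleton] at hz
          rcases hz with rfl | rfl <;> assumption
        · calc M.card ≤ 2 := hMcard
            _ = ({m1, m2} : Finset V).card := by
              rw [Finset.card_insert_of_notMem (by simp [hm21.symm]), Finset.card_singleton]
      by_cases ha : ∃ x, G.Adj x m1 ∧ G.Adj x m2
      · -- a common neighbor of m1 and m2 exists: {u, v, x} is a CDS of G
        obtain ⟨x, hx1, hx2⟩ := ha
        have hxM : x ∉ M := by
          rw [hMeq]
          simp only [Finset.mem_insert, Finset.mem_singleton]
          push_neg
          exact ⟨hx1.ne, hx2.ne⟩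
        refine hG1 {u, v, x} ?_ ?_
        · exact le_trans (Finset.card_insert_le _ _)
            (by have := Finset.card_insert_le v ({x} : Finset V); simp only [Finset.card_singleton] at this; omega)
        · refine triple_cds hadj ((hnotM x).mp hxM) ?_
          intro w hw
          by_cases hwM : w ∈ M
          · rw [hMeq] at hwM
            simp only [Finset.mem_insert, Finset.mem_singleton] at hwM
            rcases hwM with rfl | rfl
            · exact ⟨x, by simp, hx1⟩
            · exact ⟨x, by simp, hx2⟩
          · rcases (hnotM w).mp hwM with h | h
            · exact ⟨u, by simp, h⟩
            · exact ⟨v, by simp, h⟩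
      · -- no common neighbor: {v, m1, m2} is a CDS of Gᶜ
        push_neg at ha
        have hvm1 : Gᶜ.Adj v m1 := by
          rw [SimpleGraph.compl_adj]
          exact ⟨fun h => (hMfact m1 hm1).1 (h ▸ hadj), (hMfact m1 hm1).2⟩
        have hvm2 : Gᶜ.Adj v m2 := by
          rw [SimpleGraph.compl_adj]
          exact ⟨fun h => (hMfact m2 hm2).1 (h ▸ hadj), (hMfact m2 hm2).2⟩
        refine hG2 {v, m1, m2} ?_ ?_
        · exact le_trans (Finset.card_insert_le _ _)
            (by have := Finset.card_insert_le m1 ({m2} : Finset V); simp only [Finset.card_singleton] at this; omega)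
        · refine cds_star (h := v) (by simp) ?_ ?_
          · intro z hz hzv
            simp only [Finset.mem_insert, Finset.mem_singleton] at hz
            rcases hz with rfl | rfl | rfl
            · exact absurd rfl hzv
            · exact hvm1
            · exact hvm2
          · intro w hw
            simp only [Finset.mem_insert, Finset.mem_singleton] at hw
            push_neg at hw
            obtain ⟨hwv, hwm1, hwm2⟩ := hw
            by_cases h1 : G.Adj w m1
            · exact ⟨m2, by simp, (SimpleGraph.compl_adj _ _ _).mpr
                ⟨Ne.symm hwm2, fun hc => (ha w h1) hc.symm⟩⟩
            · exact ⟨m1, by simp, (SimpleGraph.compl_adj _ _ _).mpr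
                ⟨Ne.symm hwm1, fun hc => h1 hc.symm⟩⟩
    · -- M = {m1}
      push_neg at h2
      have hMeq : ∀ z ∈ M, z = m1 := h2
      by_cases ha : ∃ x, G.Adj x m1
      · -- m1 has a neighbor x: {u, v, x} is a CDS of G
        obtain ⟨x, hx1⟩ := ha
        have hxM : x ∉ M := fun hc => hx1.ne (hMeq x hc)
        refine hG1 {u, v, x} ?_ ?_
        · exact le_trans (Finset.card_insert_le _ _)
            (by have := Finset.card_insert_le v ({x} : Finset V); simp only [Finset.card_singleton] at this; omega)
        · refine triple_cds hadj ((hnotM x).mp hxM) ?_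
          intro w hw
          by_cases hwM : w ∈ M
          · rw [hMeq w hwM]
            exact ⟨x, by simp, hx1⟩
          · rcases (hnotM w).mp hwM with h | h
            · exact ⟨u, by simp, h⟩
            · exact ⟨v, by simp, h⟩
      · -- m1 is isolated: {m1} is a CDS of Gᶜ
        push_neg at ha
        refine hG2 {m1} (by simp) ?_
        refine cds_star (h := m1) (by simp) ?_ ?_
        · intro z hz hzm
          simp only [Finset.mem_singleton] at hz
          exact absurd hz hzm
        · intro w hw
          simp only [Finset.mem_singleton] at hw
          refine ⟨m1, by simp, (SimpleGraph.compl_adj _ _ _).mpr ⟨Ne.symm hw, ?_⟩⟩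
          exact fun hc => ha w hc.symm
  -- use hlt, hcard, hMcard? (hlt needed above)
end
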